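/- Assume the values h_k over slots k with Π(k) ≠ 0 are pairwise distinct, and let (q, p) be a maximizer of Problem (P). Let x be the smallest index in {1,…,|D|+1} such that the energy-causality constraint (ii) holds with equality at i = d_x (such x exists, since equality holds at i = K = d_{|D|+1}). Then, with the conventions h_{d_0} := 1 and q_{d_0} := 0: (a) q_{d_k} = 0 for every k with 1 ≤ k ≤ x − 2; and (b) ∑_{k=1}^{d_x} ∑_{n∈N_k^I} p_{k,n} = ζ·h_{d_{x−1}}·q_{d_{x−1}} + B1. -/

import Mathlib

noncomputable section

/-- The information sub-channel set `N_k^I = {0,…,N} \ {Π(k)}`. -/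
def NI (N : ℕ) (Pi : ℕ → ℕ) (k : ℕ) : Finset ℕ := Finset.Icc 0 N \ {Pi k}

/-- Feasibility for Problem (P) with a single WET sub-channel `Π(k)` per slot. -/
def FeasibleP (K N : ℕ) (h : ℕ → ℕ → ℝ) (Q ζ B1 : ℝ) (Pi : ℕ → ℕ)
    (q : ℕ → ℝ) (p : ℕ → ℕ → ℝ) : Prop :=
  (∀ k ∈ Finset.Icc 1 K, 0 ≤ q k) ∧
  (∀ k ∈ Finset.Icc 1 K, Pi k = 0 → q k = 0) ∧
  (∀ k ∈ Finset.Icc 1 K, ∀ n ∈ NI N Pi k, 0 ≤ p k n) ∧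
  (∑ k ∈ Finset.Icc 1 K, q k ≤ (K : ℝ) * Q) ∧
  (∀ i ∈ Finset.Icc 1 K,
    ∑ k ∈ Finset.Icc 1 i, ∑ n ∈ NI N Pi k, p k n ≤
      ζ * ∑ k ∈ Finset.Icc 1 (i - 1), h k (Pi k) * q k + B1)

/-- Achievable rate for Problem (P). -/
def RateP (K N : ℕ) (g : ℕ → ℕ → ℝ) (Γσ : ℝ) (Pi : ℕ → ℕ) (p : ℕ → ℕ → ℝ) : ℝ :=
  (1 / ((K : ℝ) * N)) * ∑ k ∈ Finset.Icc 1 K, ∑ n ∈ NI N Pi k,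
    Real.logb 2 (1 + g k n * p k n / Γσ)

open Classical in
/-- The set `D` of causally dominating slots. -/
def Dset (K : ℕ) (h : ℕ → ℕ → ℝ) (Pi : ℕ → ℕ) : Finset ℕ :=
  (Finset.Icc 1 (K - 1)).filter
    (fun k => Pi k ≠ 0 ∧ ∀ j, 1 ≤ j → j < k → h j (Pi j) < h k (Pi k))

end


theorem myaux_sum_shift (s : Finset ℕ) (w f : ℕ → ℝ) (a b : ℕ) (hab : a ≠ b) (δ : ℝ) :
    ∑ k ∈ s, w k * (if k = a then f k - δ else if k = b then f k + δ else f k)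
    = ∑ k ∈ s, w k * f k - (if a ∈ s then w a * δ else 0) + (if b ∈ s then w b * δ else 0) := by
  have hpt : ∀ k ∈ s, w k * (if k = a then f k - δ else if k = b then f k + δ else f k)
      = (w k * f k - (if k = a then w k * δ else 0)) + (if k = b then w k * δ else 0) := by
    intro k _
    rcases eq_or_ne k a with rfl | hka
    · simp [hab]; ring
    · rcases eq_or_ne k b with rfl | hkb
      · simp [hka]; ring
      · simp [hka, hkb]
  rw [Finset.sum_congr rfl hpt, Finset.sum_add_distrib, Finset.sum_sub_distrib,
    Finset.sum_ite_eq' s a (fun k => w k * δ), Finset.sum_ite_eq' s b (fun k => w k * δ)]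

theorem myaux_sum_shift' (s : Finset ℕ) (f : ℕ → ℝ) (a b : ℕ) (hab : a ≠ b) (δ : ℝ) :
    ∑ k ∈ s, (if k = a then f k - δ else if k = b then f k + δ else f k)
    = ∑ k ∈ s, f k - (if a ∈ s then δ else 0) + (if b ∈ s then δ else 0) := by
  have := myaux_sum_shift s (fun _ => 1) f a b hab δ
  simpa using this

theorem myaux_double_sum_pert (K N : ℕ) (Pi : ℕ → ℕ) (hK : K ∈ Finset.Icc 1 K)
    (h1 : 1 ∈ NI N Pi K)
    (f f' : ℕ → ℕ → ℝ) (hf : ∀ k n, (k = K → n ≠ 1) → f' k n = f k n) :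
    ∑ k ∈ Finset.Icc 1 K, ∑ n ∈ NI N Pi k, f' k n
    = (∑ k ∈ Finset.Icc 1 K, ∑ n ∈ NI N Pi k, f k n) + (f' K 1 - f K 1) := by
  rw [← Finset.sum_erase_add _ _ hK, ← Finset.sum_erase_add _ (fun k => ∑ n ∈ NI N Pi k, f k n) hK]
  have h2 : ∑ k ∈ (Finset.Icc 1 K).erase K, ∑ n ∈ NI N Pi k, f' k n
      = ∑ k ∈ (Finset.Icc 1 K).erase K, ∑ n ∈ NI N Pi k, f k n := by
    refine Finset.sum_congr rfl fun k hk => Finset.sum_congr rfl fun n _ => ?_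
    exact hf _ _ (fun hkK => absurd hkK (Finset.ne_of_mem_erase hk))
  have h3 : ∑ n ∈ NI N Pi K, f' K n
      = (∑ n ∈ NI N Pi K, f K n) + (f' K 1 - f K 1) := by
    rw [← Finset.sum_erase_add _ _ h1, ← Finset.sum_erase_add _ (f K) h1]
    have h4 : ∑ n ∈ (NI N Pi K).erase 1, f' K n = ∑ n ∈ (NI N Pi K).erase 1, f K n :=
      Finset.sum_congr rfl fun n hn => hf _ _ (fun _ => Finset.ne_of_mem_erase hn)
    rw [h4]; ring
  rw [h2, h3]; ring

theorem myaux_exchg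
    (K N : ℕ) (hK : 2 ≤ K) (hN : 2 ≤ N)
    (h g : ℕ → ℕ → ℝ) (hgK : 0 < g K 1)
    (Q ζ B1 Γσ : ℝ) (hζ : 0 < ζ) (hΓσ : 0 < Γσ)
    (Pi : ℕ → ℕ) (hPiK : Pi K = 0)
    (q : ℕ → ℝ) (p : ℕ → ℕ → ℝ)
    (hfeas : FeasibleP K N h Q ζ B1 Pi q p)
    (hopt : ∀ q' p', FeasibleP K N h Q ζ B1 Pi q' p' →
      RateP K N g Γσ Pi p' ≤ RateP K N g Γσ Pi p)
    (a b : ℕ) (hab : a ≠ b)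
    (ha1 : 1 ≤ a) (haK : a ≤ K - 1) (hb1 : 1 ≤ b) (hbK : b ≤ K - 1)
    (hPia : Pi a ≠ 0) (hPib : Pi b ≠ 0)
    (hhab : h a (Pi a) < h b (Pi b))
    (δ : ℝ) (hδ : 0 < δ) (hδq : δ ≤ q a)
    (hconstr : ∀ i ∈ Finset.Icc 1 K,
      ∑ k ∈ Finset.Icc 1 i, ∑ n ∈ NI N Pi k, p k n ≤
        ζ * ∑ k ∈ Finset.Icc 1 (i - 1), h k (Pi k) *
          (if k = a then q k - δ else if k = b then q k + δ else q k) + B1)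
    : False := by
  obtain ⟨hq0, hqPi, hp0, htot, hen⟩ := hfeas
  set ε : ℝ := ζ * (h b (Pi b) - h a (Pi a)) * δ with hε_def
  have hε : 0 < ε := mul_pos (mul_pos hζ (sub_pos.2 hhab)) hδ
  set q' : ℕ → ℝ := fun k => if k = a then q k - δ else if k = b then q k + δ else q k
    with hq'
  set p' : ℕ → ℕ → ℝ := fun k n => if k = K ∧ n = 1 then p k n + ε else p k n with hp'
  have hKmem : K ∈ Finset.Icc 1 K := by simp; omega
  have h1NI : 1 ∈ NI N Pi K := by simp [NI, hPiK]; omega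
  have hamem : a ∈ Finset.Icc 1 K := by simp; omega
  have hbmem : b ∈ Finset.Icc 1 K := by simp; omega
  have haK1 : a ∈ Finset.Icc 1 (K - 1) := by simp; omega
  have hbK1 : b ∈ Finset.Icc 1 (K - 1) := by simp; omega
  have hpK1 : 0 ≤ p K 1 := hp0 K hKmem 1 h1NI
  have hq'a : q' a = q a - δ := by simp [hq']
  have hq'b : q' b = q b + δ := by
    simp only [hq']
    rw [if_neg (Ne.symm hab)]
    simp
  have hq'o : ∀ k, k ≠ a → k ≠ b → q' k = q k := by
    intro k h1 h2; simp [hq', h1, h2]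
  have hp'eq : ∀ k n, (k = K → n ≠ 1) → p' k n = p k n := by
    intro k n hkn
    simp only [hp']
    rcases eq_or_ne k K with rfl | hk
    · simp [hkn rfl]
    · simp [hk]
  have hp'K1 : p' K 1 = p K 1 + ε := by simp [hp']
  -- the two sum identities
  have hRsum : ∀ s : Finset ℕ, ∑ k ∈ s, h k (Pi k) * q' k
      = ∑ k ∈ s, h k (Pi k) * q k - (if a ∈ s then h a (Pi a) * δ else 0)
        + (if b ∈ s then h b (Pi b) * δ else 0) := by
    intro s
    exact myaux_sum_shift s (fun k => h k (Pi k)) q a b hab δ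
  -- feasibility of (q', p')
  have hfeas' : FeasibleP K N h Q ζ B1 Pi q' p' := by
    refine ⟨?_, ?_, ?_, ?_, ?_⟩
    · intro k hk
      by_cases hka : k = a
      · rw [hka, hq'a]; linarith
      · by_cases hkb : k = b
        · rw [hkb, hq'b]; have := hq0 b hbmem; linarith
        · rw [hq'o k hka hkb]; exact hq0 k hk
    · intro k hk hPik
      by_cases hka : k = a
      · rw [hka] at hPik; exact absurd hPik hPia
      · by_cases hkb : k = b
        · rw [hkb] at hPik; exact absurd hPik hPib
        · rw [hq'o k hka hkb]; exact hqPi k hk hPik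
    · intro k hk n hn
      by_cases hc : k = K ∧ n = 1
      · rw [hc.1, hc.2, hp'K1]; linarith
      · push_neg at hc
        rw [hp'eq k n hc]; exact hp0 k hk n hn
    · have hs : ∑ k ∈ Finset.Icc 1 K, q' k
          = ∑ k ∈ Finset.Icc 1 K, q k - (if a ∈ Finset.Icc 1 K then δ else 0)
            + (if b ∈ Finset.Icc 1 K then δ else 0) :=
        myaux_sum_shift' (Finset.Icc 1 K) q a b hab δ
      rw [hs, if_pos hamem, if_pos hbmem]
      linarith
    · intro i hi
      rcases eq_or_ne i K with hiK | hiK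
      · subst hiK
        have hL : ∑ k ∈ Finset.Icc 1 i, ∑ n ∈ NI N Pi k, p' k n
            = (∑ k ∈ Finset.Icc 1 i, ∑ n ∈ NI N Pi k, p k n) + ε := by
          rw [myaux_double_sum_pert i N Pi hKmem h1NI p p' hp'eq, hp'K1]; ring
        have hR := hRsum (Finset.Icc 1 (i - 1))
        rw [if_pos haK1, if_pos hbK1] at hR
        rw [hL, hR]
        have hEK := hen i hKmem
        have hRe : ζ * ((∑ k ∈ Finset.Icc 1 (i - 1), h k (Pi k) * q k)
              - h a (Pi a) * δ + h b (Pi b) * δ) + B1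
            = ζ * (∑ k ∈ Finset.Icc 1 (i - 1), h k (Pi k) * q k) + B1 + ε := by
          rw [hε_def]; ring
        rw [hRe]
        linarith
      · have hL : ∑ k ∈ Finset.Icc 1 i, ∑ n ∈ NI N Pi k, p' k n
            = ∑ k ∈ Finset.Icc 1 i, ∑ n ∈ NI N Pi k, p k n := by
          refine Finset.sum_congr rfl fun k hk => Finset.sum_congr rfl fun n _ => ?_
          refine hp'eq k n fun hkK => ?_
          exfalso
          have h2 := (Finset.mem_Icc.mp hk).2
          have h3 := (Finset.mem_Icc.mp hi).2
          omega
        rw [hL]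
        exact hconstr i hi
  -- rate strictly increases
  have hub := hopt q' p' hfeas'
  have hrate : RateP K N g Γσ Pi p < RateP K N g Γσ Pi p' := by
    have hpert := myaux_double_sum_pert K N Pi hKmem h1NI
      (fun k n => Real.logb 2 (1 + g k n * p k n / Γσ))
      (fun k n => Real.logb 2 (1 + g k n * p' k n / Γσ))
      (fun k n hkn => by simp only [hp'eq k n hkn])
    have hc : 0 < 1 / ((K : ℝ) * N) := by
      have h1 : (0:ℝ) < (K : ℝ) := by exact_mod_cast (by omega : 0 < K)
      have h2 : (0:ℝ) < (N : ℝ) := by exact_mod_cast (by omega : 0 < N)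
      positivity
    have hnn : 0 ≤ g K 1 * p K 1 / Γσ := div_nonneg (mul_nonneg hgK.le hpK1) hΓσ.le
    have hlt : Real.logb 2 (1 + g K 1 * p K 1 / Γσ)
        < Real.logb 2 (1 + g K 1 * p' K 1 / Γσ) := by
      apply Real.logb_lt_logb one_lt_two
      · linarith
      · rw [hp'K1]
        have hstep : g K 1 * p K 1 < g K 1 * (p K 1 + ε) :=
          mul_lt_mul_of_pos_left (by linarith) hgK
        have := (div_lt_div_iff_of_pos_right hΓσ).2 hstep
        linarith
    unfold RateP
    rw [hpert]
    apply mul_lt_mul_of_pos_left ?_ hc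
    linarith
  linarith

theorem stmt6
    (K N : ℕ) (hK : 2 ≤ K) (hN : 2 ≤ N)
    (h g : ℕ → ℕ → ℝ)
    (hpos : ∀ k ∈ Finset.Icc 1 K, ∀ n ∈ Finset.Icc 1 N, 0 < h k n ∧ 0 < g k n)
    (hzero : ∀ k, h k 0 = 0 ∧ g k 0 = 0)
    (Q ζ B1 Γσ : ℝ) (hQ : 0 < Q) (hζ : 0 < ζ) (hB1 : 0 ≤ B1) (hΓσ : 0 < Γσ)
    (Pi : ℕ → ℕ) (hPiK : Pi K = 0) (hPiR : ∀ k ∈ Finset.Icc 1 K, Pi k ≤ N)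
    (M : ℕ) (hM : M = (Dset K h Pi).card)
    (d : ℕ → ℕ) (hd0 : d 0 = 0) (hdK : d (M + 1) = K)
    (hdmono : ∀ i j, i < j → j ≤ M + 1 → d i < d j)
    (hdmem : ∀ i, 1 ≤ i → i ≤ M → d i ∈ Dset K h Pi)
    (hdsurj : ∀ k ∈ Dset K h Pi, ∃ i, 1 ≤ i ∧ i ≤ M ∧ d i = k)
    (hdist : ∀ k ∈ Finset.Icc 1 K, ∀ k' ∈ Finset.Icc 1 K,
      Pi k ≠ 0 → Pi k' ≠ 0 → k ≠ k' → h k (Pi k) ≠ h k' (Pi k'))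
    (q : ℕ → ℝ) (p : ℕ → ℕ → ℝ)
    (hfeas : FeasibleP K N h Q ζ B1 Pi q p)
    (hopt : ∀ q' p', FeasibleP K N h Q ζ B1 Pi q' p' →
      RateP K N g Γσ Pi p' ≤ RateP K N g Γσ Pi p)
    (x : ℕ) (hx1 : 1 ≤ x) (hxM : x ≤ M + 1)
    (hxeq : ∑ k ∈ Finset.Icc 1 (d x), ∑ n ∈ NI N Pi k, p k n =
      ζ * ∑ k ∈ Finset.Icc 1 (d x - 1), h k (Pi k) * q k + B1)
    (hxmin : ∀ i, 1 ≤ i → i < x →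
      ∑ k ∈ Finset.Icc 1 (d i), ∑ n ∈ NI N Pi k, p k n <
        ζ * ∑ k ∈ Finset.Icc 1 (d i - 1), h k (Pi k) * q k + B1)
    :
    (∀ k, 1 ≤ k → k ≤ x - 2 → q (d k) = 0)
    ∧ ∑ k ∈ Finset.Icc 1 (d x), ∑ n ∈ NI N Pi k, p k n =
        ζ * (if x = 1 then 1 else h (d (x - 1)) (Pi (d (x - 1)))) *
          (if x = 1 then 0 else q (d (x - 1))) + B1 := by
  classical
  have hKmem : K ∈ Finset.Icc 1 K := by simp; omega
  have hgK1 : 0 < g K 1 := (hpos K hKmem 1 (by simp; omega)).2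
  -- basic facts about Dset
  have hD_bounds : ∀ j ∈ Dset K h Pi, 1 ≤ j ∧ j ≤ K - 1 ∧ Pi j ≠ 0 := by
    intro j hj
    simp only [Dset, Finset.mem_filter, Finset.mem_Icc] at hj
    exact ⟨hj.1.1, hj.1.2, hj.2.1⟩
  have hD_rec : ∀ j ∈ Dset K h Pi, ∀ j', 1 ≤ j' → j' < j →
      h j' (Pi j') < h j (Pi j) := by
    intro j hj
    simp only [Dset, Finset.mem_filter, Finset.mem_Icc] at hj
    exact hj.2.2
  have hD_intro : ∀ j, 1 ≤ j → j ≤ K - 1 → Pi j ≠ 0 →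
      (∀ j', 1 ≤ j' → j' < j → h j' (Pi j') < h j (Pi j)) → j ∈ Dset K h Pi := by
    intro j h1 h2 h3 h4
    simp only [Dset, Finset.mem_filter, Finset.mem_Icc]
    exact ⟨⟨h1, h2⟩, h3, h4⟩
  have hhpos : ∀ j, 1 ≤ j → j ≤ K → Pi j ≠ 0 → 0 < h j (Pi j) := by
    intro j h1 h2 hPij
    have hjm : j ∈ Finset.Icc 1 K := Finset.mem_Icc.mpr ⟨h1, h2⟩
    have hPm : Pi j ∈ Finset.Icc 1 N := Finset.mem_Icc.mpr ⟨by omega, hPiR j hjm⟩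
    exact (hpos j hjm _ hPm).1
  -- every slot with nonzero Pi is dominated by a record
  have hrec : ∀ j, 1 ≤ j → j ≤ K - 1 → Pi j ≠ 0 →
      ∃ r ∈ Dset K h Pi, r ≤ j ∧ h j (Pi j) ≤ h r (Pi r) := by
    intro j
    induction j using Nat.strong_induction_on with
    | _ j ih =>
      intro h1 h2 hPij
      by_cases hD : ∀ j', 1 ≤ j' → j' < j → h j' (Pi j') < h j (Pi j)
      · exact ⟨j, hD_intro j h1 h2 hPij hD, le_refl j, le_refl _⟩
      · push_neg at hD
        obtain ⟨j', hj'1, hj'2, hj'3⟩ := hD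
        have hPij' : Pi j' ≠ 0 := by
          intro h0
          have hz := (hzero j').1
          have hj := hhpos j h1 (by omega) hPij
          rw [h0, hz] at hj'3
          linarith
        obtain ⟨r, hr, hrle, hrh⟩ := ih j' hj'2 hj'1 (by omega) hPij'
        exact ⟨r, hr, by omega, le_trans hj'3 hrh⟩
  -- Step 1: q vanishes off records
  have hq0 : ∀ j, 1 ≤ j → j ≤ K → j ∉ Dset K h Pi → h j (Pi j) * q j = 0 := by
    intro j h1 h2 hjD
    by_cases hPij : Pi j = 0
    · rw [hPij, (hzero j).1, zero_mul]
    · have hjK : j ≠ K := fun hjK => hPij (hjK ▸ hPiK)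
      obtain ⟨r, hr, hrle, hrh⟩ := hrec j h1 (by omega) hPij
      have hrj : r ≠ j := fun hrj => hjD (hrj ▸ hr)
      have hrlt : r < j := lt_of_le_of_ne hrle hrj
      obtain ⟨hr1, hrK1, hPir⟩ := hD_bounds r hr
      have hjmem : j ∈ Finset.Icc 1 K := Finset.mem_Icc.mpr ⟨h1, h2⟩
      have hrmem : r ∈ Finset.Icc 1 K := Finset.mem_Icc.mpr ⟨hr1, by omega⟩
      have hne := hdist j hjmem r hrmem hPij hPir (by omega)
      have hlt : h j (Pi j) < h r (Pi r) := lt_of_le_of_ne hrh hne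
      by_cases hqj : q j = 0
      · rw [hqj, mul_zero]
      · exfalso
        have hqjpos : 0 < q j := lt_of_le_of_ne (hfeas.1 j hjmem) (Ne.symm hqj)
        refine myaux_exchg K N hK hN h g hgK1 Q ζ B1 Γσ hζ hΓσ Pi hPiK q p hfeas hopt
          j r (by omega) h1 (by omega) hr1 hrK1 hPij hPir hlt (q j) hqjpos le_rfl ?_
        intro i hi
        have hbase := hfeas.2.2.2.2 i hi
        have hs : ∑ k ∈ Finset.Icc 1 (i - 1), h k (Pi k) *
              (if k = j then q k - q j else if k = r then q k + q j else q k)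
            = ∑ k ∈ Finset.Icc 1 (i - 1), h k (Pi k) * q k
              - (if j ∈ Finset.Icc 1 (i - 1) then h j (Pi j) * q j else 0)
              + (if r ∈ Finset.Icc 1 (i - 1) then h r (Pi r) * q j else 0) :=
          myaux_sum_shift _ (fun k => h k (Pi k)) q j r (by omega) (q j)
        rw [hs]
        set SS := ∑ k ∈ Finset.Icc 1 (i - 1), h k (Pi k) * q k with hSSdef
        by_cases hjs : j ∈ Finset.Icc 1 (i - 1)
        · have hrs : r ∈ Finset.Icc 1 (i - 1) := by
            simp only [Finset.mem_Icc] at hjs ⊢; omega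
          rw [if_pos hjs, if_pos hrs]
          have key : 0 ≤ ζ * (h r (Pi r) * q j - h j (Pi j) * q j) :=
            mul_nonneg hζ.le (by nlinarith)
          have expand : ζ * (SS - h j (Pi j) * q j + h r (Pi r) * q j) + B1
              = (ζ * SS + B1) + ζ * (h r (Pi r) * q j - h j (Pi j) * q j) := by ring
          rw [expand]
          linarith [hbase, key]
        · rw [if_neg hjs]
          by_cases hrs : r ∈ Finset.Icc 1 (i - 1)
          · rw [if_pos hrs]
            have key : 0 ≤ ζ * (h r (Pi r) * q j) :=
              mul_nonneg hζ.le
                (mul_nonneg (hhpos r hr1 (by omega) hPir).le hqjpos.le)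
            have expand : ζ * (SS - 0 + h r (Pi r) * q j) + B1
                = (ζ * SS + B1) + ζ * (h r (Pi r) * q j) := by ring
            rw [expand]
            linarith [hbase, key]
          · rw [if_neg hrs]
            have expand : ζ * (SS - 0 + 0) + B1 = ζ * SS + B1 := by ring
            rw [expand]
            exact hbase
  -- d is bounded and order reflecting
  have hdle : ∀ i, i ≤ M + 1 → d i ≤ K := by
    intro i hi
    rcases eq_or_lt_of_le hi with heq | hlt
    · rw [heq, hdK]
    · have := hdmono i (M+1) hlt le_rfl
      rw [hdK] at this
      omega
  have hdrefl : ∀ i j', i ≤ M + 1 → j' ≤ M + 1 → d i < d j' → i < j' := by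
    intro i j' hi hj' hd
    by_contra hc
    push_neg at hc
    rcases eq_or_lt_of_le hc with heq | hlt
    · rw [heq] at hd; exact lt_irrefl _ hd
    · have := hdmono j' i hlt hi
      omega
  -- no record strictly between consecutive d's
  have hnorec : ∀ m, m ≤ M → ∀ k', d m < k' → k' < d (m+1) → k' ∉ Dset K h Pi := by
    intro m hm k' h1 h2 hk'
    obtain ⟨i, hi1, hiM, hdi⟩ := hdsurj k' hk'
    rw [← hdi] at h1 h2
    have ha := hdrefl m i (by omega) (by omega) h1
    have hb := hdrefl i (m+1) (by omega) (by omega) h2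
    omega
  -- Step 3: q vanishes at records before d (x-1)
  have hstep3 : ∀ m, 1 ≤ m → m + 2 ≤ x → q (d m) = 0 := by
    intro m hm hmx
    by_contra hqa
    have hmM : m + 1 ≤ M := by omega
    have haD := hdmem m hm (by omega)
    have hbD := hdmem (m+1) (by omega) hmM
    obtain ⟨ha1, haK1, hPia⟩ := hD_bounds _ haD
    obtain ⟨hb1, hbK1, hPib⟩ := hD_bounds _ hbD
    have habd : d m < d (m+1) := hdmono m (m+1) (by omega) (by omega)
    have hhab : h (d m) (Pi (d m)) < h (d (m+1)) (Pi (d (m+1))) :=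
      hD_rec _ hbD (d m) ha1 habd
    have hamem : d m ∈ Finset.Icc 1 K := Finset.mem_Icc.mpr ⟨ha1, by omega⟩
    have hqapos : 0 < q (d m) := lt_of_le_of_ne (hfeas.1 _ hamem) (Ne.symm hqa)
    have hapos : 0 < h (d m) (Pi (d m)) := hhpos _ ha1 (by omega) hPia
    have hslack := hxmin (m+1) (by omega) (by omega)
    set s0 : ℝ := (ζ * ∑ k ∈ Finset.Icc 1 (d (m+1) - 1), h k (Pi k) * q k + B1)
      - ∑ k ∈ Finset.Icc 1 (d (m+1)), ∑ n ∈ NI N Pi k, p k n with hs0def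
    have hs0pos : 0 < s0 := by rw [hs0def]; linarith [hslack]
    set δ : ℝ := min (q (d m)) (s0 / (ζ * h (d m) (Pi (d m)))) with hδdef
    have hδpos : 0 < δ := lt_min hqapos (div_pos hs0pos (mul_pos hζ hapos))
    have hδq : δ ≤ q (d m) := min_le_left _ _
    have hδs : ζ * h (d m) (Pi (d m)) * δ ≤ s0 := by
      have h1 := min_le_right (q (d m)) (s0 / (ζ * h (d m) (Pi (d m))))
      have h2 : 0 < ζ * h (d m) (Pi (d m)) := mul_pos hζ hapos
      calc ζ * h (d m) (Pi (d m)) * δ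
          ≤ ζ * h (d m) (Pi (d m)) * (s0 / (ζ * h (d m) (Pi (d m)))) :=
            mul_le_mul_of_nonneg_left h1 h2.le
        _ = s0 := by field_simp
    have hIoc : ∀ t : ℕ, Finset.Icc 1 t = Finset.Ioc 0 t := by
      intro t; rw [← Finset.Icc_add_one_left_eq_Ioc]; rfl
    refine myaux_exchg K N hK hN h g hgK1 Q ζ B1 Γσ hζ hΓσ Pi hPiK q p hfeas hopt
      (d m) (d (m+1)) (by omega) ha1 haK1 hb1 hbK1 hPia hPib hhab δ hδpos hδq ?_
    intro i hi
    have hbase := hfeas.2.2.2.2 i hi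
    have hi1 : 1 ≤ i := (Finset.mem_Icc.mp hi).1
    have hs : ∑ k ∈ Finset.Icc 1 (i - 1), h k (Pi k) *
          (if k = d m then q k - δ else if k = d (m+1) then q k + δ else q k)
        = ∑ k ∈ Finset.Icc 1 (i - 1), h k (Pi k) * q k
          - (if d m ∈ Finset.Icc 1 (i - 1) then h (d m) (Pi (d m)) * δ else 0)
          + (if d (m+1) ∈ Finset.Icc 1 (i - 1) then h (d (m+1)) (Pi (d (m+1))) * δ else 0) :=
      myaux_sum_shift _ (fun k => h k (Pi k)) q (d m) (d (m+1)) (by omega) δ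
    rw [hs]
    set SS := ∑ k ∈ Finset.Icc 1 (i - 1), h k (Pi k) * q k with hSSdef
    by_cases hbs : d (m+1) ∈ Finset.Icc 1 (i - 1)
    · have has : d m ∈ Finset.Icc 1 (i - 1) := by
        simp only [Finset.mem_Icc] at hbs ⊢; omega
      rw [if_pos has, if_pos hbs]
      have key : 0 ≤ ζ * (h (d (m+1)) (Pi (d (m+1))) * δ - h (d m) (Pi (d m)) * δ) :=
        mul_nonneg hζ.le (by nlinarith)
      have expand : ζ * (SS - h (d m) (Pi (d m)) * δ + h (d (m+1)) (Pi (d (m+1))) * δ) + B1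
          = (ζ * SS + B1) + ζ * (h (d (m+1)) (Pi (d (m+1))) * δ - h (d m) (Pi (d m)) * δ) := by
        ring
      rw [expand]
      linarith [hbase, key]
    · rw [if_neg hbs]
      by_cases has : d m ∈ Finset.Icc 1 (i - 1)
      · rw [if_pos has]
        have hia : d m < i := by simp only [Finset.mem_Icc] at has; omega
        have hib : i ≤ d (m+1) := by simp only [Finset.mem_Icc] at hbs; omega
        have hLle : ∑ k ∈ Finset.Icc 1 i, ∑ n ∈ NI N Pi k, p k n
            ≤ ∑ k ∈ Finset.Icc 1 (d (m+1)), ∑ n ∈ NI N Pi k, p k n := by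
          apply Finset.sum_le_sum_of_subset_of_nonneg
          · exact Finset.Icc_subset_Icc_right hib
          · intro k hk _
            apply Finset.sum_nonneg
            intro n hn
            refine hfeas.2.2.1 k ?_ n hn
            simp only [Finset.mem_Icc] at hk ⊢
            omega
        have hsplit := Finset.sum_Ioc_consecutive (fun k => h k (Pi k) * q k)
          (by omega : 0 ≤ i - 1) (by omega : i - 1 ≤ d (m+1) - 1)
        have hzero2 : ∑ k ∈ Finset.Ioc (i-1) (d (m+1) - 1), h k (Pi k) * q k = 0 := by
          apply Finset.sum_eq_zero
          intro k hk
          simp only [Finset.mem_Ioc] at hk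
          have hk1 : d m < k := by omega
          have hk2 : k < d (m+1) := by omega
          exact hq0 k (by omega) (by omega) (hnorec m (by omega) k hk1 hk2)
        have hReq : ∑ k ∈ Finset.Icc 1 (d (m+1) - 1), h k (Pi k) * q k
            = ∑ k ∈ Finset.Icc 1 (i - 1), h k (Pi k) * q k := by
          rw [hIoc, hIoc, ← hsplit, hzero2, add_zero]
        rw [hReq] at hs0def
        have expand : ζ * (SS - h (d m) (Pi (d m)) * δ + 0) + B1
            = (ζ * SS + B1) - ζ * h (d m) (Pi (d m)) * δ := by ring
        rw [expand]
        linarith [hLle, hδs, hs0def]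
      · rw [if_neg has]
        have expand : ζ * (SS - 0 + 0) + B1 = ζ * SS + B1 := by ring
        rw [expand]
        exact hbase
  -- conclusion
  refine ⟨fun k hk1 hk2 => hstep3 k hk1 (by omega), ?_⟩
  rcases eq_or_ne x 1 with hx | hx
  · subst hx
    have hd1pos : 0 < d 1 := by
      have := hdmono 0 1 (by omega) (by omega)
      omega
    have hd1K : d 1 ≤ K := hdle 1 (by omega)
    have hsum0 : ∑ k ∈ Finset.Icc 1 (d 1 - 1), h k (Pi k) * q k = 0 := by
      apply Finset.sum_eq_zero
      intro k hk
      simp only [Finset.mem_Icc] at hk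
      have hkD : k ∉ Dset K h Pi := by
        intro hkDmem
        obtain ⟨i, hi1, hiM, hdi⟩ := hdsurj k hkDmem
        have : d i < d 1 := by omega
        have := hdrefl i 1 (by omega) (by omega) this
        omega
      exact hq0 k hk.1 (by omega) hkD
    rw [hxeq, hsum0]
    simp
  · have hx2 : 2 ≤ x := by omega
    rw [if_neg hx, if_neg hx]
    have hdx1D := hdmem (x-1) (by omega) (by omega)
    obtain ⟨hdx11, hdx1K, hdx1Pi⟩ := hD_bounds _ hdx1D
    have hdlt : d (x-1) < d x := hdmono (x-1) x (by omega) hxM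
    have hdxK : d x ≤ K := hdle x hxM
    have hdx1mem : d (x-1) ∈ Finset.Icc 1 (d x - 1) :=
      Finset.mem_Icc.mpr ⟨hdx11, by omega⟩
    have hsum : ∑ k ∈ Finset.Icc 1 (d x - 1), h k (Pi k) * q k
        = h (d (x-1)) (Pi (d (x-1))) * q (d (x-1)) := by
      apply Finset.sum_eq_single_of_mem _ hdx1mem
      intro k hk hne
      simp only [Finset.mem_Icc] at hk
      by_cases hkD : k ∈ Dset K h Pi
      · obtain ⟨i, hi1, hiM, hdi⟩ := hdsurj k hkD
        have hkx : k < d x := by omega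
        rw [← hdi] at hkx hne ⊢
        have hix : i < x := hdrefl i x (by omega) hxM hkx
        have hix1 : i ≠ x - 1 := fun hh => hne (by rw [hh])
        have hq : q (d i) = 0 := hstep3 i hi1 (by omega)
        rw [hq, mul_zero]
      · exact hq0 k hk.1 (by omega) hkD
    rw [hxeq, hsum]
    ring
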